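/- arXiv:1402.6645 — 7 statements merged into one kernel-verified Lean document; each statement's English description precedes it below -/
import Mathlib

section
/- Let (X,<) be a strict order and let A, B ⊆ X be inhabited finite subsets. Then there exists a ∈ A such that a < b for all b ∈ B if and only if for every b ∈ B there exists a ∈ A with a < b. -/
/-- For a strict order (asymmetric and cotransitive relation) `lt` on `X` and
inhabited finite subsets `A, B ⊆ X`: there exists `a ∈ A` with `a < b` for all
`b ∈ B` iff for every `b ∈ B` there exists `a ∈ A` with `a < b`. -/
theorem exists_forall_iff_forall_exists_of_strictOrder {X : Type*}
    (lt : X → X → Prop)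
    (lt_asymm : ∀ a b, ¬ (lt a b ∧ lt b a))
    (lt_cotrans : ∀ a b x, lt a b → lt a x ∨ lt x b)
    (A B : Finset X) (hA : A.Nonempty) (hB : B.Nonempty) :
    (∃ a ∈ A, ∀ b ∈ B, lt a b) ↔ (∀ b ∈ B, ∃ a ∈ A, lt a b) := by
  constructor
  · rintro ⟨a, ha, h⟩ b hb
    exact ⟨a, ha, h b hb⟩
  · induction hB using Finset.Nonempty.cons_induction with
    | singleton b =>
      intro h
      obtain ⟨a, ha, hab⟩ := h b (Finset.mem_singleton_self b)
      exact ⟨a, ha, fun c hc => by rwa [Finset.mem_singleton.mp hc]⟩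
    | cons b B' hb hB' ih =>
      intro h
      obtain ⟨a, ha, hall⟩ := ih (fun c hc => h c (Finset.mem_cons_of_mem hc))
      obtain ⟨a', ha', ha'b⟩ := h b (Finset.mem_cons_self b B')
      rcases lt_cotrans a' b a ha'b with h1 | h2
      · -- a' < a : then a' < everything in B' too
        refine ⟨a', ha', fun c hc => ?_⟩
        rcases Finset.mem_cons.mp hc with rfl | hc'
        · exact ha'b
        · rcases lt_cotrans a c a' (hall c hc') with h3 | h4
          · exact absurd ⟨h3, h1⟩ (lt_asymm a a')
          · exact h4
      · -- a < b : a works for everything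
        refine ⟨a, ha, fun c hc => ?_⟩
        rcases Finset.mem_cons.mp hc with rfl | hc'
        · exact h2
        · exact hall c hc'
end

section
/- Let X be an archimedean prestreak. Then for every x ∈ X and every b ∈ ℕ with b > 0 there exists an integer a ∈ ℤ such that (a−1)/b < x < (a+1)/b (comparison of elements of X with rationals). -/
/-- A prestreak: a strict order (asymmetric and cotransitive) together with a
commutative additive monoid structure and a commutative multiplicative monoid
structure on the positive part, compatible with the order.  (The intrinsic
topology conditions of the paper are omitted, being vacuous in the classical
set-theoretic setting.) -/
structure Prestreak (X : Type*) where
  lt : X → X → Prop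
  add : X → X → X
  zero : X
  mul : X → X → X
  one : X
  lt_asymm : ∀ a b, ¬ (lt a b ∧ lt b a)
  lt_cotrans : ∀ a b x, lt a b → lt a x ∨ lt x b
  add_comm : ∀ a b, add a b = add b a
  add_assoc : ∀ a b c, add (add a b) c = add a (add b c)
  add_zero : ∀ a, add a zero = a
  zero_lt_one : lt zero one
  mul_pos : ∀ a b, lt zero a → lt zero b → lt zero (mul a b)
  mul_comm : ∀ a b, lt zero a → lt zero b → mul a b = mul b a
  mul_assoc : ∀ a b c, lt zero a → lt zero b → lt zero c →
    mul (mul a b) c = mul a (mul b c)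
  mul_one : ∀ a, lt zero a → mul a one = a
  mul_add : ∀ a b c, lt zero a → lt zero b → lt zero c →
    mul (add a b) c = add (mul a c) (mul b c)
  add_lt_add_iff : ∀ a b x, (lt (add a x) (add b x) ↔ lt a b)
  mul_lt_mul_iff : ∀ a b x, lt zero a → lt zero b → lt zero x →
    (lt (mul a x) (mul b x) ↔ lt a b)

namespace Prestreak

variable {X : Type*}

/-- Multiplication by a natural number: `0·a = 0`, `(n+1)·a = n·a + a`. -/
def nsmul (P : Prestreak X) : ℕ → X → X
  | 0, _ => P.zero
  | n + 1, a => P.add (nsmul P n a) a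

/-- The canonical image of a natural number, `n ↦ n·1`. -/
def ofNat (P : Prestreak X) (n : ℕ) : X := P.nsmul n P.one

/-- Comparison `x < q` of an element of a prestreak with a rational number,
using the canonical representation `q = (q.num⁺ − q.num⁻)/q.den`:
`x < (a−b)/c  :=  c·x + b < a`. -/
def ltQ (P : Prestreak X) (x : X) (q : ℚ) : Prop :=
  P.lt (P.add (P.nsmul q.den x) (P.ofNat ((-q.num).toNat))) (P.ofNat q.num.toNat)

/-- Comparison `q < x` of a rational with an element of a prestreak:
`(a−b)/c < x  :=  a < c·x + b`. -/
def qLt (P : Prestreak X) (q : ℚ) (x : X) : Prop :=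
  P.lt (P.ofNat q.num.toNat) (P.add (P.nsmul q.den x) (P.ofNat ((-q.num).toNat)))

/-- The archimedean property for prestreaks. -/
def Archimedean (P : Prestreak X) : Prop :=
  ∀ a b c d : X, P.lt b d →
    ∃ n : ℕ, P.lt (P.add a (P.nsmul n b)) (P.add c (P.nsmul n d))

/-- Tightness: antisymmetry of `≤` (where `a ≤ b := ¬ b < a`).
A streak is a tight archimedean prestreak. -/
def Tight (P : Prestreak X) : Prop :=
  ∀ a b : X, ¬ P.lt a b → ¬ P.lt b a → a = b

/-- The apartness relation `a # b := a < b ∨ b < a`. -/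
def Apart (P : Prestreak X) (a b : X) : Prop := P.lt a b ∨ P.lt b a

/-- A morphism of prestreaks: preserves `<`, `+`, `0`, `1` and products of
positive elements. -/
def IsHom {Y : Type*} (P : Prestreak X) (Q : Prestreak Y) (f : X → Y) : Prop :=
  (∀ a b, P.lt a b → Q.lt (f a) (f b)) ∧
  (∀ a b, f (P.add a b) = Q.add (f a) (f b)) ∧
  f P.zero = Q.zero ∧ f P.one = Q.one ∧
  (∀ a b, P.lt P.zero a → P.lt P.zero b → f (P.mul a b) = Q.mul (f a) (f b))

/-- A multiplicative structure on a prestreak: a total multiplication which is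
commutative, associative, distributes over addition, has unit `1`, restricts to
the given multiplication on positive elements, and satisfies the multiplicity
condition. -/
def IsMultiplicative (P : Prestreak X) (tmul : X → X → X) : Prop :=
  (∀ a b, tmul a b = tmul b a) ∧
  (∀ a b c, tmul (tmul a b) c = tmul a (tmul b c)) ∧
  (∀ a b c, tmul (P.add a b) c = P.add (tmul a c) (tmul b c)) ∧
  (∀ a, tmul a P.one = a) ∧
  (∀ a b, P.lt P.zero a → P.lt P.zero b → tmul a b = P.mul a b) ∧
  (∀ a b c d, P.lt b a → P.lt d c →
    P.lt (P.add (tmul a d) (tmul b c)) (P.add (tmul a c) (tmul b d)))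

end Prestreak

namespace Prestreak

variable {X : Type*} (P : Prestreak X)

lemma lt_trans' {a b c : X} (h1 : P.lt a b) (h2 : P.lt b c) : P.lt a c := by
  rcases P.lt_cotrans a b c h1 with h | h
  · exact h
  · exact absurd ⟨h2, h⟩ (P.lt_asymm b c)

lemma zero_add' (a : X) : P.add P.zero a = a := by
  rw [P.add_comm]; exact P.add_zero a

lemma add_lt_add_left_iff (a b x : X) : P.lt (P.add x a) (P.add x b) ↔ P.lt a b := by
  rw [P.add_comm x a, P.add_comm x b]; exact P.add_lt_add_iff a b x

lemma nsmul_zero_elem (n : ℕ) : P.nsmul n P.zero = P.zero := by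
  induction n with
  | zero => rfl
  | succ n ih => show P.add (P.nsmul n P.zero) P.zero = P.zero
                 rw [ih, P.add_zero]

lemma add_add_add (a b c d : X) :
    P.add (P.add a b) (P.add c d) = P.add (P.add a c) (P.add b d) := by
  rw [P.add_assoc, P.add_assoc]
  congr 1
  rw [← P.add_assoc, ← P.add_assoc, P.add_comm b c]

lemma nsmul_add_elem (n : ℕ) (a b : X) :
    P.nsmul n (P.add a b) = P.add (P.nsmul n a) (P.nsmul n b) := by
  induction n with
  | zero => show P.zero = P.add P.zero P.zero
            rw [P.add_zero]
  | succ n ih =>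
      show P.add (P.nsmul n (P.add a b)) (P.add a b) =
        P.add (P.add (P.nsmul n a) a) (P.add (P.nsmul n b) b)
      rw [ih, P.add_add_add]

lemma nsmul_add_nat (m n : ℕ) (a : X) :
    P.nsmul (m + n) a = P.add (P.nsmul m a) (P.nsmul n a) := by
  induction n with
  | zero => show P.nsmul m a = P.add (P.nsmul m a) P.zero
            rw [P.add_zero]
  | succ n ih =>
      show P.add (P.nsmul (m + n) a) a = P.add (P.nsmul m a) (P.add (P.nsmul n a) a)
      rw [ih, P.add_assoc]

lemma nsmul_mul_nat (m n : ℕ) (a : X) :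
    P.nsmul (m * n) a = P.nsmul m (P.nsmul n a) := by
  induction m with
  | zero => rw [Nat.zero_mul]; rfl
  | succ m ih =>
      rw [Nat.succ_mul, P.nsmul_add_nat, ih]
      rfl

lemma ofNat_def (n : ℕ) : P.ofNat n = P.nsmul n P.one := rfl

lemma ofNat_add (m n : ℕ) : P.ofNat (m + n) = P.add (P.ofNat m) (P.ofNat n) :=
  P.nsmul_add_nat m n P.one

lemma nsmul_ofNat (m n : ℕ) : P.nsmul m (P.ofNat n) = P.ofNat (m * n) :=
  (P.nsmul_mul_nat m n P.one).symm

lemma nsmul_lt_nsmul_iff (u v : X) :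
    ∀ n : ℕ, 0 < n → (P.lt (P.nsmul n u) (P.nsmul n v) ↔ P.lt u v) := by
  intro n
  induction n with
  | zero => intro h; exact absurd h (lt_irrefl 0)
  | succ k ih =>
      intro _
      show P.lt (P.add (P.nsmul k u) u) (P.add (P.nsmul k v) v) ↔ P.lt u v
      constructor
      · intro h
        rcases P.lt_cotrans _ _ (P.add (P.nsmul k u) v) h with h' | h'
        · exact (P.add_lt_add_left_iff u v _).mp h'
        · have hk : P.lt (P.nsmul k u) (P.nsmul k v) := (P.add_lt_add_iff _ _ v).mp h'
          rcases Nat.eq_zero_or_pos k with hk0 | hk0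
          · subst hk0
            exact absurd ⟨hk, hk⟩ (P.lt_asymm _ _)
          · exact (ih hk0).mp hk
      · intro h
        have h1 : P.lt (P.add (P.nsmul k u) u) (P.add (P.nsmul k u) v) :=
          (P.add_lt_add_left_iff u v _).mpr h
        rcases Nat.eq_zero_or_pos k with hk0 | hk0
        · subst hk0; exact h1
        · have h2 : P.lt (P.add (P.nsmul k u) v) (P.add (P.nsmul k v) v) :=
            (P.add_lt_add_iff _ _ v).mpr ((ih hk0).mpr h)
          exact P.lt_trans' h1 h2

lemma shift1 (w : X) {A B A' B' : ℕ} (h : A + B' = A' + B) :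
    P.lt (P.ofNat A) (P.add w (P.ofNat B)) ↔ P.lt (P.ofNat A') (P.add w (P.ofNat B')) := by
  rw [← P.add_lt_add_iff (P.ofNat A) (P.add w (P.ofNat B)) (P.ofNat B'),
      ← P.add_lt_add_iff (P.ofNat A') (P.add w (P.ofNat B')) (P.ofNat B),
      P.add_assoc w (P.ofNat B) (P.ofNat B'), P.add_assoc w (P.ofNat B') (P.ofNat B),
      ← P.ofNat_add B B', ← P.ofNat_add B' B, ← P.ofNat_add A B', ← P.ofNat_add A' B,
      h, Nat.add_comm B B']

lemma shift2 (w : X) {A B A' B' : ℕ} (h : A + B' = A' + B) :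
    P.lt (P.add w (P.ofNat B)) (P.ofNat A) ↔ P.lt (P.add w (P.ofNat B')) (P.ofNat A') := by
  rw [← P.add_lt_add_iff (P.add w (P.ofNat B)) (P.ofNat A) (P.ofNat B'),
      ← P.add_lt_add_iff (P.add w (P.ofNat B')) (P.ofNat A') (P.ofNat B),
      P.add_assoc w (P.ofNat B) (P.ofNat B'), P.add_assoc w (P.ofNat B') (P.ofNat B),
      ← P.ofNat_add B B', ← P.ofNat_add B' B, ← P.ofNat_add A B', ← P.ofNat_add A' B,
      h, Nat.add_comm B B']

lemma scale1 (x : X) (n C A B : ℕ) (hn : 0 < n) :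
    P.lt (P.ofNat A) (P.add (P.nsmul C x) (P.ofNat B)) ↔
    P.lt (P.ofNat (n * A)) (P.add (P.nsmul (n * C) x) (P.ofNat (n * B))) := by
  rw [← P.nsmul_lt_nsmul_iff _ _ n hn, P.nsmul_add_elem, ← P.nsmul_mul_nat,
      P.nsmul_ofNat, P.nsmul_ofNat]

lemma scale2 (x : X) (n C A B : ℕ) (hn : 0 < n) :
    P.lt (P.add (P.nsmul C x) (P.ofNat B)) (P.ofNat A) ↔
    P.lt (P.add (P.nsmul (n * C) x) (P.ofNat (n * B))) (P.ofNat (n * A)) := by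
  rw [← P.nsmul_lt_nsmul_iff _ _ n hn, P.nsmul_add_elem, ← P.nsmul_mul_nat,
      P.nsmul_ofNat, P.nsmul_ofNat]

lemma cross1 (x : X) {A1 B1 C1 A2 B2 C2 : ℕ} (h1 : 0 < C1) (h2 : 0 < C2)
    (h : A1 * C2 + B2 * C1 = A2 * C1 + B1 * C2) :
    (P.lt (P.ofNat A1) (P.add (P.nsmul C1 x) (P.ofNat B1)) ↔
     P.lt (P.ofNat A2) (P.add (P.nsmul C2 x) (P.ofNat B2))) := by
  rw [P.scale1 x C2 C1 A1 B1 h2, P.scale1 x C1 C2 A2 B2 h1, Nat.mul_comm C1 C2]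
  exact P.shift1 _ (by rw [Nat.mul_comm C2 A1, Nat.mul_comm C1 B2, Nat.mul_comm C1 A2,
    Nat.mul_comm C2 B1]; exact h)

lemma cross2 (x : X) {A1 B1 C1 A2 B2 C2 : ℕ} (h1 : 0 < C1) (h2 : 0 < C2)
    (h : A1 * C2 + B2 * C1 = A2 * C1 + B1 * C2) :
    (P.lt (P.add (P.nsmul C1 x) (P.ofNat B1)) (P.ofNat A1) ↔
     P.lt (P.add (P.nsmul C2 x) (P.ofNat B2)) (P.ofNat A2)) := by
  rw [P.scale2 x C2 C1 A1 B1 h2, P.scale2 x C1 C2 A2 B2 h1, Nat.mul_comm C1 C2]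
  exact P.shift2 _ (by rw [Nat.mul_comm C2 A1, Nat.mul_comm C1 B2, Nat.mul_comm C1 A2,
    Nat.mul_comm C2 B1]; exact h)

lemma repr_cross (q : ℚ) (A B C : ℕ) (hC : 0 < C) (hq : q = ((A : ℚ) - B) / C) :
    q.num.toNat * C + B * q.den = A * q.den + (-q.num).toNat * C := by
  have hC' : (C : ℚ) ≠ 0 := Nat.cast_ne_zero.mpr hC.ne'
  have hd' : (q.den : ℚ) ≠ 0 := Nat.cast_ne_zero.mpr q.pos.ne'
  have h1 : (q.num : ℚ) = q * q.den := by
    have h := div_mul_cancel₀ (q.num : ℚ) hd'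
    rw [Rat.num_div_den] at h
    exact h.symm
  have hnum : (q.num : ℚ) * C = ((A : ℚ) - B) * q.den := by
    rw [h1, hq]; field_simp
  have hZ : (q.num : ℤ) * C = ((A : ℤ) - B) * q.den := by exact_mod_cast hnum
  have h2 : (q.num.toNat : ℤ) - (-q.num).toNat = q.num := by omega
  have hgoal : (q.num.toNat : ℤ) * C + B * q.den = A * q.den + (-q.num).toNat * C := by
    linear_combination (C : ℤ) * h2 + hZ
  exact_mod_cast hgoal

lemma qLt_iff' (x : X) (q : ℚ) (A B C : ℕ) (hC : 0 < C) (hq : q = ((A : ℚ) - B) / C) :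
    P.qLt q x ↔ P.lt (P.ofNat A) (P.add (P.nsmul C x) (P.ofNat B)) :=
  P.cross1 x q.pos hC (repr_cross q A B C hC hq)

lemma ltQ_iff' (x : X) (q : ℚ) (A B C : ℕ) (hC : 0 < C) (hq : q = ((A : ℚ) - B) / C) :
    P.ltQ x q ↔ P.lt (P.add (P.nsmul C x) (P.ofNat B)) (P.ofNat A) :=
  P.cross2 x q.pos hC (repr_cross q A B C hC hq)

end Prestreak

/-- An archimedean prestreak is a union of rational intervals: for every
`x ∈ X` and every `b ∈ ℕ` with `b > 0` there exists `a ∈ ℤ` such that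
`(a−1)/b < x < (a+1)/b`. -/
theorem exists_int_interval_of_archimedean {X : Type*} (P : Prestreak X)
    (hA : P.Archimedean) (x : X) (b : ℕ) (hb : 0 < b) :
    ∃ a : ℤ, P.qLt (((a : ℚ) - 1) / (b : ℚ)) x ∧ P.ltQ x (((a : ℚ) + 1) / (b : ℚ)) := by
  classical
  set y := P.nsmul b x with hy
  obtain ⟨n, hn⟩ := hA y P.zero P.zero P.one P.zero_lt_one
  obtain ⟨m, hm⟩ := hA P.zero P.zero y P.one P.zero_lt_one
  rw [P.nsmul_zero_elem, P.add_zero, P.zero_add', ← P.ofNat_def] at hn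
  rw [P.nsmul_zero_elem, P.add_zero, ← P.ofNat_def] at hm
  -- hn : P.lt y (P.ofNat n), hm : P.lt P.zero (P.add y (P.ofNat m))
  have hzN : P.lt (P.add y (P.ofNat m)) (P.ofNat (n + m)) := by
    rw [P.ofNat_add]
    exact (P.add_lt_add_iff y (P.ofNat n) (P.ofNat m)).mpr hn
  have hex : ∃ k, ¬ P.lt (P.ofNat k) (P.add y (P.ofNat m)) :=
    ⟨n + m, fun h => (P.lt_asymm _ _) ⟨h, hzN⟩⟩
  set k := Nat.find hex with hkdef
  have hk : ¬ P.lt (P.ofNat k) (P.add y (P.ofNat m)) := Nat.find_spec hex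
  have hk1 : 1 ≤ k := by
    rcases Nat.eq_zero_or_pos k with h0 | h0
    · exfalso
      apply hk
      rw [h0]
      exact hm
    · exact h0
  have hlow : P.lt (P.ofNat (k - 1)) (P.add y (P.ofNat m)) := by
    have := Nat.find_min hex (show k - 1 < k by omega)
    exact not_not.mp this
  have hup : P.lt (P.add y (P.ofNat m)) (P.ofNat (k + 1)) := by
    have hstep : P.lt (P.ofNat k) (P.ofNat (k + 1)) := by
      have : P.lt (P.add (P.ofNat k) P.zero) (P.add (P.ofNat k) P.one) :=
        (P.add_lt_add_left_iff _ _ _).mpr P.zero_lt_one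
      rw [P.add_zero] at this
      exact this
    rcases P.lt_cotrans _ _ (P.add y (P.ofNat m)) hstep with h | h
    · exact absurd h hk
    · exact h
  refine ⟨(k : ℤ) - m, ?_, ?_⟩
  · rw [P.qLt_iff' x _ ((k : ℤ) - m - 1).toNat ((1 : ℤ) - ((k : ℤ) - m)).toNat b hb ?_]
    · exact (P.shift1 y (by omega)).mp hlow
    · congr 1
      have hZ : (((k : ℤ) - m - 1).toNat : ℤ) - (((1 : ℤ) - ((k : ℤ) - m)).toNat : ℤ) =
          (k : ℤ) - m - 1 := by omega
      have hc := congrArg (fun z : ℤ => (z : ℚ)) hZ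
      push_cast at hc ⊢
      linarith [hc]
  · rw [P.ltQ_iff' x _ ((k : ℤ) - m + 1).toNat (((m : ℤ) - k - 1)).toNat b hb ?_]
    · exact (P.shift2 y (by omega)).mp hup
    · congr 1
      have hZ : ((((k : ℤ) - m + 1).toNat : ℤ)) - ((((m : ℤ) - k - 1)).toNat : ℤ) =
          (k : ℤ) - m + 1 := by omega
      have hc := congrArg (fun z : ℤ => (z : ℚ)) hZ
      push_cast at hc ⊢
      linarith [hc]
end

section
/- Let X be an archimedean prestreak. Then (1) for x ∈ X and q ∈ ℚ, x < q implies there exists r ∈ ℚ with x < r < q, and q < x implies there exists r ∈ ℚ with q < r < x; and (2) for x, y ∈ X, the following are equivalent: x < y; there exists q ∈ ℚ with x < q < y; there exist q, r ∈ ℚ with x < q < r < y. -/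
section Aux

namespace PrestreakAux

variable {X : Type*}

/-- Type synonym to carry an `AddCommMonoid` instance coming from `P`. -/
def W (P : Prestreak X) : Type _ := X

instance (P : Prestreak X) : AddCommMonoid (W P) where
  add := P.add
  zero := P.zero
  add_assoc := P.add_assoc
  add_zero := P.add_zero
  zero_add a := by show P.add P.zero a = a; exact (P.add_comm P.zero a).trans (P.add_zero a)
  add_comm := P.add_comm
  nsmul n a := P.nsmul n a
  nsmul_zero _ := rfl
  nsmul_succ _ _ := rfl

variable (P : Prestreak X)

/-- The unit, viewed in `W P`. -/
def o : W P := P.one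

lemma nsmul_eq (n : ℕ) (a : W P) : P.nsmul n a = n • a := rfl
lemma ofNat_eq (n : ℕ) : P.ofNat n = n • (o P) := rfl
lemma add_eq (a b : W P) : P.add a b = a + b := rfl
lemma zero_eq : P.zero = (0 : W P) := rfl

variable {P}

lemma asymm {a b : W P} (h : P.lt a b) : ¬ P.lt b a := fun h' => P.lt_asymm a b ⟨h, h'⟩

lemma ltt {a b c : W P} (h1 : P.lt a b) (h2 : P.lt b c) : P.lt a c := by
  rcases P.lt_cotrans a b c h1 with h | h
  · exact h
  · exact absurd h2 (asymm h)

lemma le_lt {a b c : W P} (h1 : ¬ P.lt b a) (h2 : P.lt b c) : P.lt a c := by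
  rcases P.lt_cotrans b c a h2 with h | h
  · exact absurd h h1
  · exact h

lemma lt_le {a b c : W P} (h1 : P.lt a b) (h2 : ¬ P.lt c b) : P.lt a c := by
  rcases P.lt_cotrans a b c h1 with h | h
  · exact h
  · exact absurd h h2

lemma add_lt_iff (a b x : W P) : P.lt (a + x) (b + x) ↔ P.lt a b := P.add_lt_add_iff a b x

lemma add_lt_iff_left (x a b : W P) : P.lt (x + a) (x + b) ↔ P.lt a b := by
  rw [add_comm x a, add_comm x b]; exact add_lt_iff a b x

lemma add_lt_add' {a b c d : W P} (h1 : P.lt a b) (h2 : P.lt c d) : P.lt (a + c) (b + d) :=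
  ltt ((add_lt_iff a b c).2 h1) ((add_lt_iff_left b c d).2 h2)

lemma add_lt_split {a b c d : W P} (h : P.lt (a + c) (b + d)) : P.lt a b ∨ P.lt c d := by
  rcases P.lt_cotrans _ _ (b + c) h with h' | h'
  · exact Or.inl ((add_lt_iff a b c).1 h')
  · exact Or.inr ((add_lt_iff_left b c d).1 h')

lemma smul_lt {a b : W P} (n : ℕ) (h : P.lt a b) : P.lt ((n + 1) • a) ((n + 1) • b) := by
  induction n with
  | zero => simpa using h
  | succ m ih =>
      rw [succ_nsmul a (m+1), succ_nsmul b (m+1)]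
      exact add_lt_add' ih h

lemma smul_lt_reflect {a b : W P} (n : ℕ) (h : P.lt ((n + 1) • a) ((n + 1) • b)) : P.lt a b := by
  induction n with
  | zero => simpa using h
  | succ m ih =>
      rw [succ_nsmul a (m+1), succ_nsmul b (m+1)] at h
      rcases add_lt_split h with h' | h'
      · exact ih h'
      · exact h'

lemma smul_lt_iff {n : ℕ} (hn : 0 < n) (a b : W P) : P.lt (n • a) (n • b) ↔ P.lt a b := by
  obtain ⟨m, rfl⟩ := Nat.exists_eq_add_of_lt hn
  rw [Nat.zero_add]
  exact ⟨smul_lt_reflect m, smul_lt m⟩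

lemma shift_scale {n : ℕ} (hn : 0 < n) (w a b : W P) :
    P.lt a b ↔ P.lt (n • a + w) (n • b + w) := by
  rw [add_lt_iff, smul_lt_iff hn]

lemma zero_lt_o : P.lt (0 : W P) (o P) := P.zero_lt_one

lemma lt_add_o (w : W P) : P.lt w (w + o P) := by
  have := (add_lt_iff_left w (0 : W P) (o P)).2 zero_lt_o
  simpa using this

lemma o_lt_smul {m k : ℕ} (h : m < k) : P.lt (m • o P) (k • o P) := by
  obtain ⟨j, rfl⟩ := Nat.exists_eq_add_of_lt h
  have h1 : P.lt (0 : W P) ((j + 1) • o P) := by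
    simpa using smul_lt (P := P) j zero_lt_o
  have h2 := (add_lt_iff_left (m • o P) (0 : W P) ((j+1) • o P)).2 h1
  rw [add_zero, ← add_smul] at h2
  exact h2

lemma ltQ_iff' (x : W P) (q : ℚ) :
    P.ltQ x q ↔ P.lt (q.den • x + ((-q.num).toNat) • o P) ((q.num.toNat) • o P) := Iff.rfl

lemma qLt_iff' (x : W P) (q : ℚ) :
    P.qLt q x ↔ P.lt ((q.num.toNat) • o P) (q.den • x + ((-q.num).toNat) • o P) := Iff.rfl

/-- Representation independence for the comparison of prestreak elements with
rationals. -/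
lemma rep (x : W P) (q : ℚ) (A B C : ℕ) (hC : 0 < C) (h : (A : ℚ) - B = q * C) :
    (P.ltQ x q ↔ P.lt (C • x + B • o P) (A • o P)) ∧
    (P.qLt q x ↔ P.lt (A • o P) (C • x + B • o P)) := by
  set ap := q.num.toNat with hap
  set am := (-q.num).toNat with ham
  have hden : 0 < q.den := q.pos
  have hnum : (ap : ℚ) - am = (q.num : ℚ) := by
    have : (ap : ℤ) - am = q.num := by omega
    exact_mod_cast this
  have hq : (q : ℚ) * q.den = q.num := by
    have h0 : (q.den : ℚ) ≠ 0 := by positivity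
    exact ((div_eq_iff h0).1 (Rat.num_div_den q)).symm
  have key : (q.den : ℚ) * A + am * C = q.den * B + ap * C := by
    have hden' : (q.den : ℚ) ≠ 0 := by positivity
    nlinarith [h, hnum, hq]
  have E : q.den * A + am * C = q.den * B + ap * C := by exact_mod_cast key
  have e1 : C • (q.den • x + am • o P) + (q.den * B) • o P
      = (C * q.den) • x + (C * am + q.den * B) • o P := by
    rw [smul_add, smul_smul, smul_smul, add_smul]; abel
  have e2 : C • (ap • o P) + (q.den * B) • o P = (C * ap + q.den * B) • o P := by
    rw [smul_smul, add_smul]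
  have e3 : q.den • (C • x + B • o P) + (C * am) • o P
      = (C * q.den) • x + (C * am + q.den * B) • o P := by
    rw [smul_add, smul_smul, smul_smul, add_smul, Nat.mul_comm q.den C]; abel
  have e4 : q.den • (A • o P) + (C * am) • o P = (C * ap + q.den * B) • o P := by
    rw [smul_smul, ← add_smul]
    congr 1
    rw [Nat.mul_comm C ap, Nat.mul_comm C am]
    omega
  constructor
  · rw [ltQ_iff']
    rw [shift_scale hC ((q.den * B) • o P) _ _, e1, e2]
    rw [shift_scale hden ((C * am) • o P) (C • x + B • o P) (A • o P), e3, e4]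
  · rw [qLt_iff']
    rw [shift_scale hC ((q.den * B) • o P) _ _, e2, e1]
    rw [shift_scale hden ((C * am) • o P) (A • o P) (C • x + B • o P), e4, e3]

end PrestreakAux

end Aux
open PrestreakAux in
/-- Density of the rationals in an archimedean prestreak. -/
theorem rationals_dense_in_archimedean_prestreak {X : Type*} (P : Prestreak X)
    (hA : P.Archimedean) :
    (∀ (x : X) (q : ℚ), P.ltQ x q → ∃ r : ℚ, P.ltQ x r ∧ r < q) ∧
    (∀ (x : X) (q : ℚ), P.qLt q x → ∃ r : ℚ, q < r ∧ P.qLt r x) ∧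
    (∀ x y : X,
      (P.lt x y ↔ ∃ q : ℚ, P.ltQ x q ∧ P.qLt q y) ∧
      (P.lt x y ↔ ∃ q r : ℚ, P.ltQ x q ∧ q < r ∧ P.qLt r y)) := by
  classical
  have hqden : ∀ q : ℚ, (q : ℚ) * q.den = q.num := by
    intro q
    have h0 : (q.den : ℚ) ≠ 0 := by positivity
    exact ((div_eq_iff h0).1 (Rat.num_div_den q)).symm
  have hqnum : ∀ q : ℚ, ((q.num.toNat : ℚ)) - (((-q.num).toNat : ℚ)) = (q.num : ℚ) := by
    intro q
    have : (q.num.toNat : ℤ) - ((-q.num).toNat : ℤ) = q.num := by omega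
    exact_mod_cast this
  -- Part 1
  have hpart1 : ∀ (x : W P) (q : ℚ), P.ltQ x q → ∃ r : ℚ, P.ltQ x r ∧ r < q := by
    intro x q h
    obtain ⟨n, hn⟩ := hA P.one (P.add (P.nsmul q.den x) (P.ofNat ((-q.num).toNat)))
      P.zero (P.ofNat q.num.toNat) h
    have hn' : P.lt (o P + n • (q.den • x + ((-q.num).toNat) • o P))
        ((0 : W P) + n • ((q.num.toNat) • o P)) := hn
    rw [zero_add] at hn'
    rcases n with _ | m
    · exfalso
      rw [zero_smul, zero_smul, add_zero] at hn'
      exact asymm zero_lt_o hn'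
    · have hCpos : 0 < (m + 1) * q.den := Nat.mul_pos (Nat.succ_pos m) q.pos
      have hCne : ((((m + 1) * q.den : ℕ)) : ℚ) ≠ 0 := by
        exact_mod_cast Nat.pos_iff_ne_zero.1 hCpos
      refine ⟨((((m + 1) * q.num.toNat : ℕ) : ℚ) - (((m + 1) * (-q.num).toNat + 1 : ℕ) : ℚ)) /
          (((m + 1) * q.den : ℕ) : ℚ), ?_, ?_⟩
      · have cond : ((((m + 1) * q.num.toNat : ℕ)) : ℚ) - (((m + 1) * (-q.num).toNat + 1 : ℕ)) =
            (((((m + 1) * q.num.toNat : ℕ) : ℚ) - (((m + 1) * (-q.num).toNat + 1 : ℕ) : ℚ)) /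
              (((m + 1) * q.den : ℕ) : ℚ)) * (((m + 1) * q.den : ℕ) : ℚ) :=
          (div_mul_cancel₀ _ hCne).symm
        refine ((rep x _ _ _ _ hCpos cond).1).2 ?_
        have e5 : o P + (m + 1) • (q.den • x + ((-q.num).toNat) • o P) =
            ((m + 1) * q.den) • x + ((m + 1) * (-q.num).toNat + 1) • o P := by
          rw [smul_add, smul_smul, smul_smul, add_smul, one_smul]; abel
        have e6 : (m + 1) • ((q.num.toNat) • o P) = ((m + 1) * q.num.toNat) • o P :=
          smul_smul _ _ _
        rw [e5, e6] at hn'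
        exact hn'
      · rw [div_lt_iff₀ (by exact_mod_cast hCpos)]
        have hkey : (q : ℚ) * (((m + 1) * q.den : ℕ) : ℚ) =
            ((m + 1 : ℕ) : ℚ) * (q.num.toNat : ℚ) - ((m + 1 : ℕ) : ℚ) * ((-q.num).toNat : ℚ) := by
          push_cast
          linear_combination ((m : ℚ) + 1) * (hqden q) - ((m : ℚ) + 1) * (hqnum q)
        push_cast at hkey ⊢
        linarith [hkey]
  -- Part 2
  have hpart2 : ∀ (x : W P) (q : ℚ), P.qLt q x → ∃ r : ℚ, q < r ∧ P.qLt r x := by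
    intro x q h
    obtain ⟨n, hn⟩ := hA P.one (P.ofNat q.num.toNat) P.zero
      (P.add (P.nsmul q.den x) (P.ofNat ((-q.num).toNat))) h
    have hn' : P.lt (o P + n • ((q.num.toNat) • o P))
        ((0 : W P) + n • (q.den • x + ((-q.num).toNat) • o P)) := hn
    rw [zero_add] at hn'
    rcases n with _ | m
    · exfalso
      rw [zero_smul, zero_smul, add_zero] at hn'
      exact asymm zero_lt_o hn'
    · have hCpos : 0 < (m + 1) * q.den := Nat.mul_pos (Nat.succ_pos m) q.pos
      have hCne : ((((m + 1) * q.den : ℕ)) : ℚ) ≠ 0 := by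
        exact_mod_cast Nat.pos_iff_ne_zero.1 hCpos
      refine ⟨((((m + 1) * q.num.toNat + 1 : ℕ) : ℚ) - (((m + 1) * (-q.num).toNat : ℕ) : ℚ)) /
          (((m + 1) * q.den : ℕ) : ℚ), ?_, ?_⟩
      · rw [lt_div_iff₀ (by exact_mod_cast hCpos)]
        have hkey : (q : ℚ) * (((m + 1) * q.den : ℕ) : ℚ) =
            ((m + 1 : ℕ) : ℚ) * (q.num.toNat : ℚ) - ((m + 1 : ℕ) : ℚ) * ((-q.num).toNat : ℚ) := by
          push_cast
          linear_combination ((m : ℚ) + 1) * (hqden q) - ((m : ℚ) + 1) * (hqnum q)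
        push_cast at hkey ⊢
        linarith [hkey]
      · have cond : ((((m + 1) * q.num.toNat + 1 : ℕ)) : ℚ) - (((m + 1) * (-q.num).toNat : ℕ)) =
            (((((m + 1) * q.num.toNat + 1 : ℕ) : ℚ) - (((m + 1) * (-q.num).toNat : ℕ) : ℚ)) /
              (((m + 1) * q.den : ℕ) : ℚ)) * (((m + 1) * q.den : ℕ) : ℚ) :=
          (div_mul_cancel₀ _ hCne).symm
        refine ((rep x _ _ _ _ hCpos cond).2).2 ?_
        have e5 : o P + (m + 1) • ((q.num.toNat) • o P) =
            ((m + 1) * q.num.toNat + 1) • o P := by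
          rw [smul_smul, add_smul, one_smul]; abel
        have e6 : (m + 1) • (q.den • x + ((-q.num).toNat) • o P) =
            ((m + 1) * q.den) • x + ((m + 1) * (-q.num).toNat) • o P := by
          rw [smul_add, smul_smul, smul_smul]
        rw [e5, e6] at hn'
        exact hn'
  -- x < y gives a rational in between
  have hbetween : ∀ x y : W P, P.lt x y → ∃ q : ℚ, P.ltQ x q ∧ P.qLt q y := by
    intro x y hxy
    obtain ⟨n, hn⟩ := hA (P.add P.one P.one) x P.zero y hxy
    have hn' : P.lt ((o P + o P) + n • x) ((0 : W P) + n • y) := hn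
    rw [zero_add] at hn'
    rcases n with _ | m
    · exfalso
      rw [zero_smul, zero_smul, add_zero] at hn'
      exact asymm (ltt zero_lt_o (lt_add_o (o P))) hn'
    · obtain ⟨M, hM⟩ := hA (P.nsmul (m + 1) x) P.zero P.zero P.one P.zero_lt_one
      have hM' : P.lt ((m + 1) • x + M • (0 : W P)) ((0 : W P) + M • o P) := hM
      rw [smul_zero, add_zero, zero_add] at hM'
      obtain ⟨b, hb⟩ := hA P.zero P.zero (P.nsmul (m + 1) x) P.one P.zero_lt_one
      have hb' : P.lt ((0 : W P) + b • (0 : W P)) ((m + 1) • x + b • o P) := hb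
      rw [smul_zero, add_zero] at hb'
      have hzM : P.lt ((m + 1) • x + b • o P) ((M + b) • o P) := by
        have h7 := (add_lt_iff _ _ (b • o P)).2 hM'
        rw [← add_smul] at h7
        exact h7
      have hex : ∃ k, P.lt ((m + 1) • x + b • o P) (k • o P) := ⟨M + b, hzM⟩
      have ha0 : Nat.find hex ≠ 0 := by
        intro h0
        have hsp := Nat.find_spec hex
        rw [h0] at hsp
        exact asymm hb' hsp
      obtain ⟨a', ha'⟩ : ∃ a', Nat.find hex = a' + 1 := ⟨Nat.find hex - 1, by omega⟩
      have hfa : P.lt ((m + 1) • x + b • o P) ((a' + 1) • o P) := by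
        rw [← ha']; exact Nat.find_spec hex
      have hmin : ¬ P.lt ((m + 1) • x + b • o P) (a' • o P) := Nat.find_min hex (by omega)
      have h3 : P.lt ((a' + 1) • o P) (((m + 1) • x + b • o P) + (o P + o P)) := by
        apply le_lt (b := ((m + 1) • x + b • o P) + o P)
        · rw [succ_nsmul]
          exact fun hcon => hmin ((add_lt_iff _ _ (o P)).1 hcon)
        · exact (add_lt_iff_left ((m + 1) • x + b • o P) (o P) (o P + o P)).2 (lt_add_o (o P))
      have h4 : P.lt (((m + 1) • x + b • o P) + (o P + o P)) ((m + 1) • y + b • o P) := by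
        have h5 := (add_lt_iff _ _ (b • o P)).2 hn'
        have e : ((m + 1) • x + b • o P) + (o P + o P) = (o P + o P + (m + 1) • x) + b • o P := by
          abel
        rw [e]; exact h5
      have h6 : P.lt ((a' + 1) • o P) ((m + 1) • y + b • o P) := ltt h3 h4
      have hCne : (((m + 1 : ℕ)) : ℚ) ≠ 0 := by exact_mod_cast (Nat.succ_pos m).ne'
      have cond : (((a' + 1 : ℕ)) : ℚ) - ((b : ℕ) : ℚ) =
          ((((a' + 1 : ℕ) : ℚ) - ((b : ℕ) : ℚ)) / (((m + 1 : ℕ)) : ℚ)) * (((m + 1 : ℕ)) : ℚ) :=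
        (div_mul_cancel₀ _ hCne).symm
      refine ⟨(((a' + 1 : ℕ) : ℚ) - ((b : ℕ) : ℚ)) / (((m + 1 : ℕ)) : ℚ), ?_, ?_⟩
      · exact ((rep x _ _ _ _ (Nat.succ_pos m) cond).1).2 hfa
      · exact ((rep y _ _ _ _ (Nat.succ_pos m) cond).2).2 h6
  -- backwards, single rational
  have hback1 : ∀ (x y : W P) (q : ℚ), P.ltQ x q → P.qLt q y → P.lt x y := by
    intro x y q h1 h2
    rw [ltQ_iff'] at h1
    rw [qLt_iff'] at h2
    exact (smul_lt_iff q.pos x y).1 ((add_lt_iff _ _ _).1 (ltt h1 h2))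
  -- backwards, two rationals
  have hback2 : ∀ (x y : W P) (q r : ℚ), P.ltQ x q → q < r → P.qLt r y → P.lt x y := by
    intro x y q r h1 hqr h2
    have hdq : (0 : ℚ) < q.den := by exact_mod_cast q.pos
    have hdr : (0 : ℚ) < r.den := by exact_mod_cast r.pos
    have h5 : (q.num : ℚ) * r.den < (r.num : ℚ) * q.den := by
      calc (q.num : ℚ) * r.den = q * q.den * r.den := by rw [hqden q]
        _ < r * q.den * r.den :=
          mul_lt_mul_of_pos_right (mul_lt_mul_of_pos_right hqr hdq) hdr
        _ = (r.num : ℚ) * q.den := by rw [mul_right_comm, hqden r]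
    have hN : q.num * r.den < r.num * q.den := by exact_mod_cast h5
    have hdpos : 0 < q.den * r.den := Nat.mul_pos q.pos r.pos
    have hA1Z : (((q.num * r.den + ((q.num * r.den).natAbs + (r.num * q.den).natAbs)).toNat : ℤ))
        = q.num * r.den + ((q.num * r.den).natAbs + (r.num * q.den).natAbs) := by omega
    have hA2Z : (((r.num * q.den + ((q.num * r.den).natAbs + (r.num * q.den).natAbs)).toNat : ℤ))
        = r.num * q.den + ((q.num * r.den).natAbs + (r.num * q.den).natAbs) := by omega
    set B : ℕ := (q.num * r.den).natAbs + (r.num * q.den).natAbs with hB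
    set A1 : ℕ := (q.num * r.den + (B : ℤ)).toNat with hA1
    set A2 : ℕ := (r.num * q.den + (B : ℤ)).toNat with hA2
    have hA1Q : (A1 : ℚ) = (q.num : ℚ) * r.den + B := by exact_mod_cast hA1Z
    have hA2Q : (A2 : ℚ) = (r.num : ℚ) * q.den + B := by exact_mod_cast hA2Z
    have cond1 : ((A1 : ℕ) : ℚ) - (B : ℚ) = q * ((q.den * r.den : ℕ) : ℚ) := by
      rw [hA1Q]
      push_cast
      linear_combination (-(r.den : ℚ)) * (hqden q)
    have cond2 : ((A2 : ℕ) : ℚ) - (B : ℚ) = r * ((q.den * r.den : ℕ) : ℚ) := by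
      rw [hA2Q]
      push_cast
      linear_combination (-(q.den : ℚ)) * (hqden r)
    have h1' := ((rep x q A1 B (q.den * r.den) hdpos cond1).1).1 h1
    have h2' := ((rep y r A2 B (q.den * r.den) hdpos cond2).2).1 h2
    have hA12 : A1 < A2 := by omega
    have hmid := o_lt_smul (P := P) hA12
    have hchain := ltt (ltt h1' hmid) h2'
    exact (smul_lt_iff hdpos x y).1 ((add_lt_iff _ _ _).1 hchain)
  refine ⟨hpart1, hpart2, fun x y => ?_⟩
  constructor
  · exact ⟨fun h => hbetween x y h, fun ⟨q, h1, h2⟩ => hback1 x y q h1 h2⟩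
  · constructor
    · intro h
      obtain ⟨q, h1, h2⟩ := hbetween x y h
      obtain ⟨r, hr1, hr2⟩ := hpart2 y q h2
      exact ⟨q, r, h1, hr1, hr2⟩
    · rintro ⟨q, r, h1, hqr, h2⟩
      exact hback2 x y q r h1 hqr h2
end

section
/- Let X be a prestreak such that for all x, y ∈ X with x < y there exist rationals q, r, s, t with q < x < r < s < y < t (comparisons of elements of X with rationals). Then X is archimedean. -/
private lemma arch_core {X : Type*} (P : Prestreak X)
    (a b c d : X) (e f g m u u' v v' w w' z z' : ℕ)
    (he : 0 < e) (hf : 0 < f) (hg : 0 < g) (hm : 0 < m)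
    (H1 : P.lt (P.add (P.nsmul e b) (P.nsmul u' P.one)) (P.nsmul u P.one))
    (H2 : P.lt (P.nsmul v P.one) (P.add (P.nsmul f d) (P.nsmul v' P.one)))
    (H3 : P.lt (P.add (P.nsmul g a) (P.nsmul w' P.one)) (P.nsmul w P.one))
    (H4 : P.lt (P.nsmul z P.one) (P.add (P.nsmul m c) (P.nsmul z' P.one)))
    (key : f*u + e*v' < e*v + f*u') :
    ∃ n : ℕ, P.lt (P.add a (P.nsmul n b)) (P.add c (P.nsmul n d)) := by
  classical
  letI : AddCommMonoid X :=
    { add := P.add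
      zero := P.zero
      add_assoc := P.add_assoc
      add_comm := P.add_comm
      add_zero := P.add_zero
      zero_add := fun x => (P.add_comm P.zero x).trans (P.add_zero x)
      nsmul := fun n x => P.nsmul n x
      nsmul_zero := fun _ => rfl
      nsmul_succ := fun _ _ => rfl }
  set o := P.one with ho
  -- basic order facts
  have ltt : ∀ {x y zz : X}, P.lt x y → P.lt y zz → P.lt x zz := by
    intro x y zz h1 h2
    rcases P.lt_cotrans x y zz h1 with h' | h'
    · exact h'
    · exact absurd ⟨h2, h'⟩ (P.lt_asymm y zz)
  have addr : ∀ {x y : X} (t : X), P.lt x y → P.lt (x + t) (y + t) :=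
    fun t hxy => (P.add_lt_add_iff _ _ t).mpr hxy
  have addl : ∀ {x y : X} (t : X), P.lt x y → P.lt (t + x) (t + y) := by
    intro x y t hxy
    have := addr t hxy
    rwa [add_comm x t, add_comm y t] at this
  have add2 : ∀ {x y p q : X}, P.lt x y → P.lt p q → P.lt (x + p) (y + q) :=
    fun h1 h2 => ltt (addr _ h1) (addl _ h2)
  have nlt : ∀ (k : ℕ) {x y : X}, P.lt x y → P.lt ((k+1) • x) ((k+1) • y) := by
    intro k
    induction k with
    | zero => intro x y hxy; simpa using hxy
    | succ j ih =>
      intro x y hxy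
      have h2 := add2 (ih hxy) hxy
      rw [succ_nsmul x (j+1), succ_nsmul y (j+1)]
      exact h2
  have ncancel : ∀ (k : ℕ) {x y : X}, P.lt (k • x) (k • y) → P.lt x y := by
    intro k
    induction k with
    | zero =>
      intro x y hxy
      rw [zero_nsmul, zero_nsmul] at hxy
      exact absurd ⟨hxy, hxy⟩ (P.lt_asymm _ _)
    | succ j ih =>
      intro x y hxy
      rw [succ_nsmul x j, succ_nsmul y j] at hxy
      rcases P.lt_cotrans _ _ (j • x + y) hxy with h' | h'
      · rw [add_comm (j•x) x, add_comm (j•x) y] at h'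
        exact (P.add_lt_add_iff x y (j • x)).mp h'
      · exact ih ((P.add_lt_add_iff (j•x) (j•y) y).mp h')
  have posn : ∀ k : ℕ, P.lt (0 : X) ((k+1) • o) := by
    intro k
    induction k with
    | zero => rw [zero_add, one_nsmul]; exact P.zero_lt_one
    | succ j ih =>
      have step : P.lt ((j+1) • o) ((j+1+1) • o) := by
        have h0 : P.lt ((0:X) + (j+1) • o) (o + (j+1) • o) := addr _ P.zero_lt_one
        rw [zero_add, add_comm o ((j+1) • o)] at h0
        rw [succ_nsmul o (j+1)]
        exact h0
      exact ltt ih step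
  have ofNatlt : ∀ {p q : ℕ}, p < q → P.lt (p • o) (q • o) := by
    intro p q hpq
    obtain ⟨j, rfl⟩ : ∃ j, q = p + (j+1) := ⟨q - p - 1, by omega⟩
    rw [add_nsmul]
    have h0 : P.lt ((0:X) + p • o) ((j+1) • o + p • o) := addr _ (posn j)
    rw [zero_add, add_comm ((j+1) • o) (p • o)] at h0
    exact h0
  have scale : ∀ (k p q q' : ℕ) (x : X), 0 < k →
      P.lt (p • x + q' • o) (q • o) →
      P.lt ((k*p) • x + (k*q') • o) ((k*q) • o) := by
    intro k p q q' x hk hlt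
    obtain ⟨j, rfl⟩ : ∃ j, k = j + 1 := ⟨k - 1, by omega⟩
    have h0 := nlt j hlt
    rw [nsmul_add] at h0
    rw [show (j+1)*p = p*(j+1) from by ring, show (j+1)*q' = q'*(j+1) from by ring,
      show (j+1)*q = q*(j+1) from by ring, mul_nsmul, mul_nsmul, mul_nsmul]
    exact h0
  have scale' : ∀ (k p q q' : ℕ) (x : X), 0 < k →
      P.lt (q • o) (p • x + q' • o) →
      P.lt ((k*q) • o) ((k*p) • x + (k*q') • o) := by
    intro k p q q' x hk hlt
    obtain ⟨j, rfl⟩ : ∃ j, k = j + 1 := ⟨k - 1, by omega⟩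
    have h0 := nlt j hlt
    rw [nsmul_add] at h0
    rw [show (j+1)*p = p*(j+1) from by ring, show (j+1)*q' = q'*(j+1) from by ring,
      show (j+1)*q = q*(j+1) from by ring, mul_nsmul, mul_nsmul, mul_nsmul]
    exact h0
  -- choose n
  set n : ℕ := e*f*m*w + e*f*g*z' + 1 with hn
  have hnpos : 0 < n := by omega
  refine ⟨n, ?_⟩
  -- restate hypotheses in • notation
  have H1' : P.lt (e • b + u' • o) (u • o) := H1
  have H2' : P.lt (v • o) (f • d + v' • o) := H2
  have H3' : P.lt (g • a + w' • o) (w • o) := H3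
  have H4' : P.lt (z • o) (m • c + z' • o) := H4
  -- scaled versions
  have S1 : P.lt ((e*f*m*g*n) • b + (f*g*m*n*u') • o) ((f*g*m*n*u) • o) := by
    have := scale (f*g*m*n) e u u' b
      (by positivity) H1'
    rwa [show f*g*m*n*e = e*f*m*g*n from by ring] at this
  have S2 : P.lt ((e*g*m*n*v) • o) ((e*f*m*g*n) • d + (e*g*m*n*v') • o) := by
    have := scale' (e*g*m*n) f v v' d (by positivity) H2'
    rwa [show e*g*m*n*f = e*f*m*g*n from by ring] at this
  have S3 : P.lt ((e*f*m*g) • a + (e*f*m*w') • o) ((e*f*m*w) • o) := by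
    have := scale (e*f*m) g w w' a (by positivity) H3'
    exact this
  have S4 : P.lt ((e*f*g*z) • o) ((e*f*m*g) • c + (e*f*g*z') • o) := by
    have := scale' (e*f*g) m z z' c (by positivity) H4'
    rwa [show e*f*g*m = e*f*m*g from by ring] at this
  -- combine
  have T1 : P.lt (((e*f*m*g) • a + (e*f*m*g*n) • b) + (e*f*m*w' + f*g*m*n*u') • o)
      ((e*f*m*w + f*g*m*n*u) • o) := by
    have h0 := add2 S3 S1
    have eq1 : ((e*f*m*g) • a + (e*f*m*w') • o) + ((e*f*m*g*n) • b + (f*g*m*n*u') • o)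
        = ((e*f*m*g) • a + (e*f*m*g*n) • b) + (e*f*m*w' + f*g*m*n*u') • o := by
      rw [add_nsmul]; abel
    have eq2 : (e*f*m*w) • o + (f*g*m*n*u) • o = (e*f*m*w + f*g*m*n*u) • o :=
      (add_nsmul o _ _).symm
    rwa [eq1, eq2] at h0
  have T2 : P.lt ((e*f*g*z + e*g*m*n*v) • o)
      (((e*f*m*g) • c + (e*f*m*g*n) • d) + (e*f*g*z' + e*g*m*n*v') • o) := by
    have h0 := add2 S4 S2
    have eq1 : (e*f*g*z) • o + (e*g*m*n*v) • o = (e*f*g*z + e*g*m*n*v) • o :=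
      (add_nsmul o _ _).symm
    have eq2 : ((e*f*m*g) • c + (e*f*g*z') • o) + ((e*f*m*g*n) • d + (e*g*m*n*v') • o)
        = ((e*f*m*g) • c + (e*f*m*g*n) • d) + (e*f*g*z' + e*g*m*n*v') • o := by
      rw [add_nsmul]; abel
    rwa [eq1, eq2] at h0
  -- the numeric comparison
  have natlem : ∀ (Eb Fb L R : ℕ), L + 1 ≤ R → Eb + L * (Eb+1) ≤ Fb + R * (Eb+1) := by
    intro Eb Fb L R hLR
    calc Eb + L*(Eb+1) ≤ (L+1)*(Eb+1) := by
          have hh : (L+1)*(Eb+1) = L*(Eb+1) + (Eb+1) := by ring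
          rw [hh, Nat.add_comm Eb (L*(Eb+1))]
          exact Nat.add_le_add_left (Nat.le_succ Eb) _
      _ ≤ R*(Eb+1) := Nat.mul_le_mul_right _ hLR
      _ ≤ Fb + R*(Eb+1) := Nat.le_add_left _ _
  have hLR : g*m*(f*u + e*v') + 1 ≤ g*m*(e*v + f*u') := by
    calc g*m*(f*u + e*v') + 1 ≤ g*m*(f*u + e*v') + g*m :=
          Nat.add_le_add_left (Nat.mul_pos hg hm) _
      _ = g*m*(f*u + e*v' + 1) := by ring
      _ ≤ g*m*(e*v + f*u') := Nat.mul_le_mul_left _ key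
  have hnat : (e*f*m*w + f*g*m*n*u) + (e*f*g*z' + e*g*m*n*v')
      ≤ (e*f*g*z + e*g*m*n*v) + (e*f*m*w' + f*g*m*n*u') := by
    have h9 := natlem (e*f*m*w + e*f*g*z') (e*f*g*z + e*f*m*w')
      (g*m*(f*u + e*v')) (g*m*(e*v + f*u')) hLR
    calc (e*f*m*w + f*g*m*n*u) + (e*f*g*z' + e*g*m*n*v')
        = (e*f*m*w + e*f*g*z') + (g*m*(f*u + e*v')) * ((e*f*m*w + e*f*g*z')+1) := by
          rw [hn]; ring
      _ ≤ (e*f*g*z + e*f*m*w') + (g*m*(e*v + f*u')) * ((e*f*m*w + e*f*g*z')+1) := h9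
      _ = (e*f*g*z + e*g*m*n*v) + (e*f*m*w' + f*g*m*n*u') := by rw [hn]; ring
  -- chain
  have mid : P.lt ((e*f*m*w + f*g*m*n*u) • o + (e*f*g*z' + e*g*m*n*v') • o)
      ((e*f*g*z + e*g*m*n*v) • o + (e*f*m*w' + f*g*m*n*u') • o) ∨
      ((e*f*m*w + f*g*m*n*u) • o + (e*f*g*z' + e*g*m*n*v') • o)
      = ((e*f*g*z + e*g*m*n*v) • o + (e*f*m*w' + f*g*m*n*u') • o) := by
    rw [← add_nsmul, ← add_nsmul]
    rcases Nat.eq_or_lt_of_le hnat with heq | hlt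
    · exact Or.inr (by rw [heq])
    · exact Or.inl (ofNatlt hlt)
  have step1 : P.lt ((((e*f*m*g) • a + (e*f*m*g*n) • b) + (e*f*m*w' + f*g*m*n*u') • o)
        + (e*f*g*z' + e*g*m*n*v') • o)
      ((e*f*m*w + f*g*m*n*u) • o + (e*f*g*z' + e*g*m*n*v') • o) :=
    addr _ T1
  have step3 : P.lt ((e*f*g*z + e*g*m*n*v) • o + (e*f*m*w' + f*g*m*n*u') • o)
      ((((e*f*m*g) • c + (e*f*m*g*n) • d) + (e*f*g*z' + e*g*m*n*v') • o)
        + (e*f*m*w' + f*g*m*n*u') • o) :=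
    addr _ T2
  have big : P.lt ((((e*f*m*g) • a + (e*f*m*g*n) • b) + (e*f*m*w' + f*g*m*n*u') • o)
        + (e*f*g*z' + e*g*m*n*v') • o)
      ((((e*f*m*g) • c + (e*f*m*g*n) • d) + (e*f*g*z' + e*g*m*n*v') • o)
        + (e*f*m*w' + f*g*m*n*u') • o) := by
    rcases mid with hmid | hmid
    · exact ltt (ltt step1 hmid) step3
    · exact ltt step1 (hmid ▸ step3)
  have eqL : (((e*f*m*g) • a + (e*f*m*g*n) • b) + (e*f*m*w' + f*g*m*n*u') • o)
        + (e*f*g*z' + e*g*m*n*v') • o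
      = ((e*f*m*g) • a + (e*f*m*g*n) • b)
        + ((e*f*m*w' + f*g*m*n*u') • o + (e*f*g*z' + e*g*m*n*v') • o) := by abel
  have eqR : (((e*f*m*g) • c + (e*f*m*g*n) • d) + (e*f*g*z' + e*g*m*n*v') • o)
        + (e*f*m*w' + f*g*m*n*u') • o
      = ((e*f*m*g) • c + (e*f*m*g*n) • d)
        + ((e*f*m*w' + f*g*m*n*u') • o + (e*f*g*z' + e*g*m*n*v') • o) := by abel
  rw [eqL, eqR] at big
  have canc := (P.add_lt_add_iff ((e*f*m*g) • a + (e*f*m*g*n) • b)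
    ((e*f*m*g) • c + (e*f*m*g*n) • d)
    ((e*f*m*w' + f*g*m*n*u') • o + (e*f*g*z' + e*g*m*n*v') • o)).mp big
  have canc2 : P.lt ((e*f*m*g) • (a + n • b)) ((e*f*m*g) • (c + n • d)) := by
    rw [nsmul_add, nsmul_add, ← mul_nsmul, ← mul_nsmul]
    rwa [show n*(e*f*m*g) = e*f*m*g*n from by ring]
  exact ncancel _ canc2

/-- A prestreak in which any two elements `x < y` can be separated (and
bounded) by rationals `q < x < r < s < y < t` is archimedean. -/
theorem archimedean_of_rational_separation {X : Type*} (P : Prestreak X)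
    (h : ∀ x y : X, P.lt x y → ∃ q r s t : ℚ,
      P.qLt q x ∧ P.ltQ x r ∧ r < s ∧ P.qLt s y ∧ P.ltQ y t) :
    P.Archimedean := by
  intro a b c d hbd
  obtain ⟨q0, r, s, t0, -, hbr, hrs, hsd, -⟩ := h b d hbd
  have ha1 : P.lt a (P.add a P.one) := by
    have h0 := (P.add_lt_add_iff P.zero P.one a).mpr P.zero_lt_one
    rwa [P.add_comm P.zero a, P.add_zero, P.add_comm P.one a] at h0
  obtain ⟨-, A, -, -, -, haA, -, -, -⟩ := h a (P.add a P.one) ha1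
  have hc1 : P.lt c (P.add c P.one) := by
    have h0 := (P.add_lt_add_iff P.zero P.one c).mpr P.zero_lt_one
    rwa [P.add_comm P.zero c, P.add_zero, P.add_comm P.one c] at h0
  obtain ⟨C, -, -, -, hCc, -, -, -, -⟩ := h c (P.add c P.one) hc1
  have hnum : r.num * (s.den : ℤ) < s.num * (r.den : ℤ) := (Rat.lt_iff r s).mp hrs
  have h1 : ((r.num.toNat : ℤ)) - ((-r.num).toNat : ℤ) = r.num := by omega
  have h2 : ((s.num.toNat : ℤ)) - ((-s.num).toNat : ℤ) = s.num := by omega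
  have hZ : (s.den : ℤ) * r.num.toNat + (r.den : ℤ) * (-s.num).toNat
      < (r.den : ℤ) * s.num.toNat + (s.den : ℤ) * (-r.num).toNat := by
    rw [← h1, ← h2] at hnum
    linarith
  have key : s.den * r.num.toNat + r.den * (-s.num).toNat
      < r.den * s.num.toNat + s.den * (-r.num).toNat := by exact_mod_cast hZ
  exact arch_core P a b c d r.den s.den A.den C.den
    r.num.toNat (-r.num).toNat s.num.toNat (-s.num).toNat
    A.num.toNat (-A.num).toNat C.num.toNat (-C.num).toNat
    r.pos s.pos A.pos C.pos hbr hsd haA hCc key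
end

section
/- There exists at most one prestreak morphism from a prestreak X to a streak Y; that is, any two prestreak morphisms f, g : X → Y with Y a streak are equal. -/
namespace Prestreak

variable {X : Type*} (P : Prestreak X)

lemma asymm' {a b : X} (h : P.lt a b) : ¬ P.lt b a :=
  fun h' => P.lt_asymm a b ⟨h, h'⟩

lemma notlt_lt {w t s : X} (h1 : ¬ P.lt w t) (h2 : P.lt w s) : P.lt t s := by
  rcases P.lt_cotrans w s t h2 with h | h
  · exact absurd h h1
  · exact h

lemma add_lt_right {a b : X} (x : X) (h : P.lt a b) :
    P.lt (P.add a x) (P.add b x) := (P.add_lt_add_iff a b x).2 h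

lemma lt_add_one (t : X) : P.lt t (P.add t P.one) := by
  have h := (P.add_lt_add_iff P.zero P.one t).2 P.zero_lt_one
  rwa [P.add_comm P.zero t, P.add_zero, P.add_comm P.one t] at h

lemma hom_nsmul {Y : Type*} (Q : Prestreak Y) {f : X → Y}
    (hf : P.IsHom Q f) (n : ℕ) (x : X) : f (P.nsmul n x) = Q.nsmul n (f x) := by
  induction n with
  | zero => exact hf.2.2.1
  | succ n ih =>
    show f (P.add (P.nsmul n x) x) = Q.add (Q.nsmul n (f x)) (f x)
    rw [hf.2.1, ih]

lemma hom_nsmul_one {Y : Type*} (Q : Prestreak Y) {f : X → Y}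
    (hf : P.IsHom Q f) (n : ℕ) : f (P.nsmul n P.one) = Q.nsmul n Q.one := by
  rw [P.hom_nsmul Q hf, hf.2.2.2.1]

end Prestreak

lemma hom_lt_aux {X Y : Type*}
    (P : Prestreak X) (Q : Prestreak Y) (hQA : Q.Archimedean)
    (f g : X → Y) (hf : P.IsHom Q f) (hg : P.IsHom Q g) (x : X)
    (h : Q.lt (f x) (g x)) : False := by
  classical
  set u := f x with hu
  set v := g x with hv
  -- Step 1: n with n·u + 3·1 < n·v
  obtain ⟨n, h1⟩ := hQA (Q.nsmul 3 Q.one) u Q.zero v h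
  rw [Q.add_comm (Q.nsmul 3 Q.one), Q.zero_add'] at h1
  -- Step 2: m with 0 < n·u + m·1
  obtain ⟨m, h2⟩ := hQA Q.zero Q.zero (Q.nsmul n u) Q.one Q.zero_lt_one
  rw [Q.nsmul_zero_elem, Q.add_zero] at h2
  set w := Q.add (Q.nsmul n u) (Q.nsmul m Q.one) with hw
  -- w + 3·1 < n·v + m·1
  have h1' := Q.add_lt_right (Q.nsmul m Q.one) h1
  rw [Q.add_assoc, Q.add_comm (Q.nsmul 3 Q.one), ← Q.add_assoc, ← hw] at h1'
  -- Step 3: k with w < k·1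
  obtain ⟨k, h3⟩ := hQA w Q.zero Q.zero Q.one Q.zero_lt_one
  rw [Q.nsmul_zero_elem, Q.add_zero, Q.zero_add'] at h3
  -- Step 4: least a with w < a·1
  have hP : ∃ j : ℕ, Q.lt w (Q.nsmul j Q.one) := ⟨k, h3⟩
  have hwa0 : Q.lt w (Q.nsmul (Nat.find hP) Q.one) := Nat.find_spec hP
  have hapos : 0 < Nat.find hP := by
    rcases Nat.eq_zero_or_pos (Nat.find hP) with h0 | h0
    · rw [h0] at hwa0
      exact absurd hwa0 (Q.asymm' h2)
    · exact h0
  obtain ⟨a', hA⟩ : ∃ a', Nat.find hP = a' + 1 :=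
    ⟨Nat.find hP - 1, (Nat.succ_pred_eq_of_pos hapos).symm⟩
  have hwa : Q.lt w (Q.nsmul (a' + 1) Q.one) := hA ▸ hwa0
  have hmin : ¬ Q.lt w (Q.nsmul a' Q.one) := Nat.find_min hP (by omega)
  -- a'·1 < w + 1
  have h5 : Q.lt (Q.nsmul a' Q.one) (Q.add w Q.one) :=
    Q.notlt_lt hmin (Q.lt_add_one w)
  -- a·1 < w + 2·1
  have h6 : Q.lt (Q.nsmul (a' + 1) Q.one) (Q.add w (Q.nsmul 2 Q.one)) := by
    have := Q.add_lt_right Q.one h5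
    show Q.lt (Q.add (Q.nsmul a' Q.one) Q.one) _
    have e2 : Q.nsmul 2 Q.one = Q.add Q.one Q.one := by
      show Q.add (Q.add Q.zero Q.one) Q.one = _
      rw [Q.zero_add']
    rw [e2, ← Q.add_assoc]
    exact this
  -- (a+1)·1 < w + 3·1
  have h7 : Q.lt (Q.nsmul (a' + 2) Q.one) (Q.add w (Q.nsmul 3 Q.one)) := by
    have := Q.add_lt_right Q.one h6
    show Q.lt (Q.add (Q.nsmul (a' + 1) Q.one) Q.one) _
    have e3 : Q.nsmul 3 Q.one = Q.add (Q.nsmul 2 Q.one) Q.one := rfl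
    rw [e3, ← Q.add_assoc]
    exact this
  -- (a+1)·1 < n·v + m·1
  have h8 : Q.lt (Q.nsmul (a' + 2) Q.one)
      (Q.add (Q.nsmul n v) (Q.nsmul m Q.one)) := Q.lt_trans' h7 h1'
  -- In X : t := n·x + m·1
  set t := P.add (P.nsmul n x) (P.nsmul m P.one) with ht
  have hX : P.lt (P.nsmul (a' + 1) P.one) (P.nsmul (a' + 2) P.one) := by
    show P.lt _ (P.add (P.nsmul (a' + 1) P.one) P.one)
    exact P.lt_add_one _
  have hft : f t = w := by
    rw [ht, hf.2.1, P.hom_nsmul Q hf, P.hom_nsmul_one Q hf, ← hu, hw]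
  have hgt : g t = Q.add (Q.nsmul n v) (Q.nsmul m Q.one) := by
    rw [ht, hg.2.1, P.hom_nsmul Q hg, P.hom_nsmul_one Q hg, ← hv]
  rcases P.lt_cotrans _ _ t hX with hc | hc
  · have := hf.1 _ _ hc
    rw [hft, P.hom_nsmul_one Q hf] at this
    exact absurd this (Q.asymm' hwa)
  · have := hg.1 _ _ hc
    rw [hgt, P.hom_nsmul_one Q hg] at this
    exact absurd this (Q.asymm' h8)


/-- There is at most one prestreak morphism from a prestreak to a streak. -/
theorem hom_to_streak_unique {X Y : Type*}
    (P : Prestreak X) (Q : Prestreak Y) (hQA : Q.Archimedean) (hQT : Q.Tight)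
    (f g : X → Y) (hf : P.IsHom Q f) (hg : P.IsHom Q g) :
    f = g := by
  funext x
  apply hQT
  · exact fun h => hom_lt_aux P Q hQA f g hf hg x h
  · exact fun h => hom_lt_aux P Q hQA g f hg hf x h
end

section
/- A surjective prestreak morphism f : X → Y between streaks X and Y is an isomorphism: f is bijective and its inverse f⁻¹ : Y → X is again a prestreak morphism. -/
section Aux

variable {X Y : Type*}

private lemma Prestreak.lt_irrefl' (P : Prestreak X) (a : X) : ¬ P.lt a a :=
  fun h => P.lt_asymm a a ⟨h, h⟩

private lemma Prestreak.not_lt_add (P : Prestreak X) {a b c d : X}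
    (h1 : ¬ P.lt a b) (h2 : ¬ P.lt c d) : ¬ P.lt (P.add a c) (P.add b d) := by
  intro h
  rcases P.lt_cotrans _ _ (P.add b c) h with h' | h'
  · exact h1 ((P.add_lt_add_iff a b c).1 h')
  · rw [P.add_comm b c, P.add_comm b d] at h'
    exact h2 ((P.add_lt_add_iff c d b).1 h')

private lemma Prestreak.nsmul_reflect (P : Prestreak X) {a b : X} (n : ℕ)
    (h : P.lt (P.nsmul n a) (P.nsmul n b)) : P.lt a b := by
  by_contra hab
  induction n with
  | zero => exact P.lt_irrefl' _ h
  | succ n ih =>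
    exact P.not_lt_add (fun h' => ih h') hab h

private lemma hom_nsmul {P : Prestreak X} {Q : Prestreak Y} {f : X → Y}
    (hf : P.IsHom Q f) (n : ℕ) (a : X) :
    f (P.nsmul n a) = Q.nsmul n (f a) := by
  induction n with
  | zero => exact hf.2.2.1
  | succ n ih => rw [Prestreak.nsmul, Prestreak.nsmul, hf.2.1, ih]

/-- A prestreak morphism into an archimedean prestreak reflects the order. -/
private lemma hom_reflect_lt {P : Prestreak X} {Q : Prestreak Y}
    (hQA : Q.Archimedean) {f : X → Y} (hf : P.IsHom Q f) {a b : X}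
    (h : Q.lt (f a) (f b)) : P.lt a b := by
  obtain ⟨n, hn⟩ := hQA Q.one (f a) Q.zero (f b) h
  rw [Q.add_comm Q.zero, Q.add_zero, ← hom_nsmul hf, ← hom_nsmul hf,
    ← hf.2.2.2.1, ← hf.2.1] at hn
  set A := P.nsmul n a with hA
  set B := P.nsmul n b with hB
  have hle : ¬ P.lt B (P.add P.one A) := fun hc => Q.lt_asymm _ _ ⟨hn, hf.1 _ _ hc⟩
  have hA1 : P.lt A (P.add P.one A) := by
    have := (P.add_lt_add_iff P.zero P.one A).2 P.zero_lt_one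
    rwa [P.add_comm P.zero A, P.add_zero] at this
  rcases P.lt_cotrans _ _ B hA1 with h' | h'
  · exact P.nsmul_reflect n h'
  · exact absurd h' hle

end Aux

/-- A surjective prestreak morphism between streaks is an isomorphism: it is
bijective and its inverse is again a prestreak morphism. -/
theorem surjective_streak_hom_is_iso {X Y : Type*}
    (P : Prestreak X) (hPA : P.Archimedean) (hPT : P.Tight)
    (Q : Prestreak Y) (hQA : Q.Archimedean) (hQT : Q.Tight)
    (f : X → Y) (hf : P.IsHom Q f) (hsurj : Function.Surjective f) :
    Function.Bijective f ∧
      ∃ g : Y → X, Function.LeftInverse g f ∧ Function.RightInverse g f ∧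
        Q.IsHom P g := by
  have hinj : Function.Injective f := by
    intro a b hab
    refine hPT a b (fun h => ?_) (fun h => ?_)
    · have := hf.1 a b h; rw [hab] at this; exact Q.lt_irrefl' _ this
    · have := hf.1 b a h; rw [hab] at this; exact Q.lt_irrefl' _ this
  choose g hg using hsurj
  have hleft : Function.LeftInverse g f := fun a => hinj (by rw [hg])
  refine ⟨⟨hinj, fun y => ⟨g y, hg y⟩⟩, g, hleft, hg, ?_, ?_, ?_, ?_, ?_⟩
  · intro a b h
    apply hom_reflect_lt hQA hf
    rw [hg, hg]; exact h
  · intro a b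
    apply hinj
    rw [hg, hf.2.1, hg, hg]
  · apply hinj; rw [hg, hf.2.2.1]
  · apply hinj; rw [hg, hf.2.2.2.1]
  · intro a b ha hb
    have ha' : P.lt P.zero (g a) := by
      apply hom_reflect_lt hQA hf
      rw [hg, hf.2.2.1]; exact ha
    have hb' : P.lt P.zero (g b) := by
      apply hom_reflect_lt hQA hf
      rw [hg, hf.2.2.1]; exact hb
    apply hinj
    rw [hg, hf.2.2.2.2 _ _ ha' hb', hg, hg]
end

section
/- The natural numbers ℕ, with the usual order, addition and multiplication, form a prestreak, and for every prestreak X there exists exactly one prestreak morphism ι : ℕ → X; it is given inductively by ι(0) = 0 and ι(n+1) = ι(n) + 1. Moreover, ι is injective. -/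
/-- The natural numbers with their usual order, addition and multiplication
form a prestreak. -/
def natPrestreak : Prestreak ℕ where
  lt := (· < ·)
  add := (· + ·)
  zero := 0
  mul := (· * ·)
  one := 1
  lt_asymm := by intro a b; omega
  lt_cotrans := by intro a b x h; omega
  add_comm := Nat.add_comm
  add_assoc := Nat.add_assoc
  add_zero := Nat.add_zero
  zero_lt_one := Nat.zero_lt_one
  mul_pos := fun a b ha hb => Nat.mul_pos ha hb
  mul_comm := fun a b _ _ => Nat.mul_comm a b
  mul_assoc := fun a b c _ _ _ => Nat.mul_assoc a b c
  mul_one := fun a _ => Nat.mul_one a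
  mul_add := fun a b c _ _ _ => Nat.add_mul a b c
  add_lt_add_iff := fun _ _ _ => Nat.add_lt_add_iff_right
  mul_lt_mul_iff := fun a b x _ _ hx => by
    first
    | exact mul_lt_mul_iff_of_pos_right hx
    | exact Nat.mul_lt_mul_right hx

section Aux

variable {X : Type*} (P : Prestreak X)

lemma Prestreak.zero_add'_s11 (a : X) : P.add P.zero a = a := by
  rw [P.add_comm]; exact P.add_zero a

lemma Prestreak.lt_trans'_s11 {a b c : X} (h1 : P.lt a b) (h2 : P.lt b c) : P.lt a c := by
  rcases P.lt_cotrans a b c h1 with h | h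
  · exact h
  · exact absurd ⟨h2, h⟩ (P.lt_asymm _ _)

lemma Prestreak.ofNat_zero : P.ofNat 0 = P.zero := rfl

lemma Prestreak.ofNat_succ (n : ℕ) : P.ofNat (n + 1) = P.add (P.ofNat n) P.one := rfl

lemma Prestreak.ofNat_one : P.ofNat 1 = P.one := by
  rw [P.ofNat_succ, P.ofNat_zero, P.zero_add'_s11]

lemma Prestreak.lt_ofNat_succ (n : ℕ) : P.lt (P.ofNat n) (P.ofNat (n + 1)) := by
  have h := (P.add_lt_add_iff P.zero P.one (P.ofNat n)).mpr P.zero_lt_one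
  rw [P.add_comm P.zero, P.add_zero, P.add_comm P.one] at h
  exact h

lemma Prestreak.ofNat_strictMono {m n : ℕ} (h : m < n) : P.lt (P.ofNat m) (P.ofNat n) := by
  induction n with
  | zero => omega
  | succ n ih =>
    rcases Nat.lt_succ_iff_lt_or_eq.mp h with h' | h'
    · exact P.lt_trans'_s11 (ih h') (P.lt_ofNat_succ n)
    · subst h'; exact P.lt_ofNat_succ m

lemma Prestreak.ofNat_pos {n : ℕ} (h : 0 < n) : P.lt P.zero (P.ofNat n) :=
  P.ofNat_strictMono h

lemma Prestreak.ofNat_add_s11 (m n : ℕ) :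
    P.ofNat (m + n) = P.add (P.ofNat m) (P.ofNat n) := by
  induction n with
  | zero => rw [Nat.add_zero, P.ofNat_zero, P.add_zero]
  | succ n ih =>
    show P.ofNat ((m + n) + 1) = _
    rw [P.ofNat_succ, ih, P.add_assoc, ← P.ofNat_succ]

lemma Prestreak.ofNat_mul {m n : ℕ} (hm : 0 < m) (hn : 0 < n) :
    P.ofNat (m * n) = P.mul (P.ofNat m) (P.ofNat n) := by
  induction m with
  | zero => omega
  | succ m ih =>
    rcases Nat.eq_zero_or_pos m with h | h
    · subst h
      rw [Nat.one_mul, P.ofNat_one, P.mul_comm _ _ P.zero_lt_one (P.ofNat_pos hn),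
        P.mul_one _ (P.ofNat_pos hn)]
    · have hfm := P.ofNat_pos h
      have hfn := P.ofNat_pos hn
      rw [Nat.succ_mul, P.ofNat_add_s11, ih h, P.ofNat_succ,
        P.mul_add _ _ _ hfm P.zero_lt_one hfn,
        P.mul_comm P.one _ P.zero_lt_one hfn, P.mul_one _ hfn]

end Aux

/-- `ℕ` is the initial prestreak: for every prestreak `X` there is exactly one
prestreak morphism `ι : ℕ → X`; it is given inductively by `ι(0) = 0` and
`ι(n+1) = ι(n) + 1`, and it is injective. -/
theorem nat_initial_prestreak {X : Type*} (P : Prestreak X) :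
    ∃ f : ℕ → X, natPrestreak.IsHom P f ∧
      (∀ g : ℕ → X, natPrestreak.IsHom P g → g = f) ∧
      f 0 = P.zero ∧ (∀ n : ℕ, f (n + 1) = P.add (f n) P.one) ∧
      Function.Injective f := by
  refine ⟨P.ofNat, ⟨?_, ?_, rfl, P.ofNat_one, ?_⟩, ?_, rfl, fun n => rfl, ?_⟩
  · intro a b h; exact P.ofNat_strictMono h
  · intro a b; exact P.ofNat_add_s11 a b
  · intro a b ha hb; exact P.ofNat_mul ha hb
  · rintro g ⟨hlt, hadd, hzero, hone, hmul⟩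
    funext n
    induction n with
    | zero => exact hzero
    | succ n ih =>
      have h1 : g 1 = P.one := hone
      have : g (n + 1) = P.add (g n) (g 1) := hadd n 1
      rw [this, ih, h1, P.ofNat_succ]
  · intro a b hab
    by_contra hne
    rcases Nat.lt_or_ge a b with h | h
    · have h1 := P.ofNat_strictMono h
      rw [hab] at h1
      exact P.lt_asymm _ _ ⟨h1, h1⟩
    · have h' : b < a := lt_of_le_of_ne h (Ne.symm hne)
      have h1 := P.ofNat_strictMono h'
      rw [hab] at h1
      exact P.lt_asymm _ _ ⟨h1, h1⟩
end
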